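/- (Energy drops by at least 1 when far from a 2-cycle.) Let x ∈ {0,1}^V be an adoption vector whose trajectory does not enter a 2-cycle within 2|V| time steps, i.e. there is no t ≤ 2|V| with F^{t+2}(x) = F^t(x). Then F²(x) differs from x in at least 2 coordinates, and consequently E(F(x)) + 1 ≤ E(x). -/

import Mathlib

open Finset

/-- The threshold update map: node `i` adopts Behavior 1 iff the number of its
neighbors currently adopting Behavior 1 is at least its threshold `b i`. -/
def thrUpd {V : Type*} [Fintype V] [DecidableEq V] (G : SimpleGraph V) [DecidableRel G.Adj]
    (b : V → ℤ) (x : V → Bool) : V → Bool :=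
  fun i => decide (b i ≤ ∑ j ∈ G.neighborFinset i, (if x j then (1 : ℤ) else 0))

/-- An adoption vector regarded as a rational vector. -/
def toQ {V : Type*} (x : V → Bool) : V → ℚ := fun i => if x i then 1 else 0

/-- The half-integer thresholds `β i = b i - 1/2`. -/
def halfThr {V : Type*} (b : V → ℤ) : V → ℚ := fun i => (b i : ℚ) - 1/2

/-- The adjacency matrix of `G` applied to (the rational version of) an adoption
vector: `(A·x) i = ∑_{j ∈ δ(i)} x j`. -/
def Avec {V : Type*} [Fintype V] [DecidableEq V] (G : SimpleGraph V) [DecidableRel G.Adj]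
    (x : V → Bool) : V → ℚ :=
  fun i => ∑ j ∈ G.neighborFinset i, toQ x j

/-- The energy `E(x) = ⟨β, x⟩ − ⟨A·x − β, F(x)⟩`. -/
def energy {V : Type*} [Fintype V] [DecidableEq V] (G : SimpleGraph V) [DecidableRel G.Adj]
    (b : V → ℤ) (x : V → Bool) : ℚ :=
  (∑ i, halfThr b i * toQ x i) - ∑ i, (Avec G x i - halfThr b i) * toQ (thrUpd G b x) i

section Aux

variable {V : Type*} [Fintype V] [DecidableEq V] (G : SimpleGraph V) [DecidableRel G.Adj]
  (b : V → ℤ)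

lemma thrUpd_mono {x y : V → Bool} (h : ∀ i, x i = true → y i = true) :
    ∀ i, thrUpd G b x i = true → thrUpd G b y i = true := by
  intro i hi
  simp only [thrUpd, decide_eq_true_eq] at hi ⊢
  refine hi.trans (Finset.sum_le_sum fun j _ => ?_)
  by_cases hx : x j = true
  · rw [if_pos hx, if_pos (h j hx)]
  · rw [if_neg hx]
    split <;> norm_num

lemma chain_stab_inc (g : (V → Bool) → (V → Bool))
    (hm : ∀ u v : V → Bool, (∀ i, u i = true → v i = true) →
      ∀ i, g u i = true → g v i = true)
    (x : V → Bool) (hx : ∀ i, x i = true → g x i = true) :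
    ∃ t ≤ Fintype.card V, g^[t+1] x = g^[t] x := by
  by_contra hc
  push_neg at hc
  have hstep : ∀ t, ∀ i, g^[t] x i = true → g^[t+1] x i = true := by
    intro t
    induction t with
    | zero => simpa using hx
    | succ t ih =>
      intro i hi
      rw [Function.iterate_succ_apply'] at hi ⊢
      exact hm _ _ ih i hi
  have hcard : ∀ t, t ≤ Fintype.card V + 1 →
      t ≤ (univ.filter fun i => g^[t] x i = true).card := by
    intro t
    induction t with
    | zero => simp
    | succ t ih =>
      intro ht
      have h1 : t ≤ (univ.filter fun i => g^[t] x i = true).card := ih (by omega)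
      have hsub : (univ.filter fun i => g^[t] x i = true) ⊆
          (univ.filter fun i => g^[t+1] x i = true) := by
        intro i hi
        simp only [Finset.mem_filter, Finset.mem_univ, true_and] at hi ⊢
        exact hstep t i hi
      have hne : g^[t+1] x ≠ g^[t] x := hc t (by omega)
      have hss : (univ.filter fun i => g^[t] x i = true) ⊂
          (univ.filter fun i => g^[t+1] x i = true) := by
        refine ⟨hsub, fun hsup => hne ?_⟩
        funext i
        have hiff : g^[t] x i = true ↔ g^[t+1] x i = true := by
          constructor
          · intro hh; exact hstep t i hh
          · intro hh
            have hmem : i ∈ (univ.filter fun i => g^[t+1] x i = true) :=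
              Finset.mem_filter.mpr ⟨Finset.mem_univ i, hh⟩
            exact (Finset.mem_filter.mp (hsup hmem)).2
        rw [Bool.eq_iff_iff]
        exact hiff.symm
      have := Finset.card_lt_card hss
      omega
  have h1 := hcard (Fintype.card V + 1) le_rfl
  have h2 := Finset.card_filter_le Finset.univ
    (fun i => g^[Fintype.card V + 1] x i = true)
  rw [Finset.card_univ] at h2
  omega

lemma chain_stab_dec (g : (V → Bool) → (V → Bool))
    (hm : ∀ u v : V → Bool, (∀ i, u i = true → v i = true) →
      ∀ i, g u i = true → g v i = true)
    (x : V → Bool) (hx : ∀ i, g x i = true → x i = true) :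
    ∃ t ≤ Fintype.card V, g^[t+1] x = g^[t] x := by
  by_contra hc
  push_neg at hc
  have hstep : ∀ t, ∀ i, g^[t+1] x i = true → g^[t] x i = true := by
    intro t
    induction t with
    | zero => simpa using hx
    | succ t ih =>
      intro i hi
      rw [Function.iterate_succ_apply'] at hi ⊢
      exact hm _ _ ih i hi
  have hcard : ∀ t, t ≤ Fintype.card V + 1 →
      t ≤ (univ.filter fun i => g^[t] x i = false).card := by
    intro t
    induction t with
    | zero => simp
    | succ t ih =>
      intro ht
      have h1 : t ≤ (univ.filter fun i => g^[t] x i = false).card := ih (by omega)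
      have hsub : (univ.filter fun i => g^[t] x i = false) ⊆
          (univ.filter fun i => g^[t+1] x i = false) := by
        intro i hi
        simp only [Finset.mem_filter, Finset.mem_univ, true_and] at hi ⊢
        cases hh : g^[t+1] x i with
        | false => rfl
        | true => rw [hstep t i hh] at hi; exact hi
      have hne : g^[t+1] x ≠ g^[t] x := hc t (by omega)
      have hss : (univ.filter fun i => g^[t] x i = false) ⊂
          (univ.filter fun i => g^[t+1] x i = false) := by
        refine ⟨hsub, fun hsup => hne ?_⟩
        funext i
        cases hh : g^[t+1] x i with
        | true => exact (hstep t i hh).symm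
        | false =>
          have hmem : i ∈ (univ.filter fun i => g^[t+1] x i = false) :=
            Finset.mem_filter.mpr ⟨Finset.mem_univ i, hh⟩
          exact ((Finset.mem_filter.mp (hsup hmem)).2).symm
      have := Finset.card_lt_card hss
      omega
  have h1 := hcard (Fintype.card V + 1) le_rfl
  have h2 := Finset.card_filter_le Finset.univ
    (fun i => g^[Fintype.card V + 1] x i = false)
  rw [Finset.card_univ] at h2
  omega

lemma sum_nbr_comm (f : V → V → ℚ) :
    ∑ i, ∑ j ∈ G.neighborFinset i, f i j = ∑ j, ∑ i ∈ G.neighborFinset j, f i j := by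
  have hN : ∀ i : V, G.neighborFinset i = Finset.univ.filter (fun j => G.Adj i j) := by
    intro i; ext j; simp
  simp only [hN, Finset.sum_filter]
  rw [Finset.sum_comm]
  apply Finset.sum_congr rfl
  intro j _
  apply Finset.sum_congr rfl
  intro i _
  simp only [G.adj_comm i j]

lemma avec_symm (x y : V → Bool) :
    ∑ i, Avec G x i * toQ y i = ∑ i, Avec G y i * toQ x i := by
  simp only [Avec, Finset.sum_mul]
  rw [sum_nbr_comm G (fun i j => toQ x j * toQ y i)]
  apply Finset.sum_congr rfl
  intro j _
  exact Finset.sum_congr rfl fun i _ => mul_comm _ _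

lemma energy_diff (x : V → Bool) :
    energy G b x - energy G b (thrUpd G b x) =
      ∑ i, (Avec G (thrUpd G b x) i - halfThr b i) *
        (toQ (thrUpd G b (thrUpd G b x)) i - toQ x i) := by
  have hsymm := avec_symm G x (thrUpd G b x)
  simp only [energy, sub_mul, mul_sub, Finset.sum_sub_distrib]
  linarith [hsymm]

lemma avec_int (y : V → Bool) (i : V) :
    Avec G y i = ((∑ j ∈ G.neighborFinset i, if y j then (1:ℤ) else 0 : ℤ) : ℚ) := by
  unfold Avec toQ
  rw [Int.cast_sum]
  refine Finset.sum_congr rfl fun j _ => ?_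
  split <;> simp

lemma term_ge (y x : V → Bool) (i : V) :
    (if thrUpd G b y i ≠ x i then (1:ℚ)/2 else 0) ≤
      (Avec G y i - halfThr b i) * (toQ (thrUpd G b y) i - toQ x i) := by
  have hA := avec_int G y i
  rcases le_or_gt (b i) (∑ j ∈ G.neighborFinset i, if y j then (1:ℤ) else 0) with h1 | h1
  · have hz : thrUpd G b y i = true := decide_eq_true h1
    have hc : (1:ℚ)/2 ≤ Avec G y i - halfThr b i := by
      rw [hA, halfThr]
      have : (b i : ℚ) ≤ ((∑ j ∈ G.neighborFinset i, if y j then (1:ℤ) else 0 : ℤ) : ℚ) := by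
        exact_mod_cast h1
      linarith
    cases hx : x i with
    | true => simp [toQ, hz, hx]
    | false =>
      simp only [toQ, hz, hx, if_true, if_false, hz, ne_eq]
      norm_num
      linarith
  · have hz : thrUpd G b y i = false := decide_eq_false (not_le.mpr h1)
    have hc : Avec G y i - halfThr b i ≤ -(1/2) := by
      rw [hA, halfThr]
      have h2 : (∑ j ∈ G.neighborFinset i, if y j then (1:ℤ) else 0) ≤ b i - 1 := by omega
      have : ((∑ j ∈ G.neighborFinset i, if y j then (1:ℤ) else 0 : ℤ) : ℚ) ≤ (b i : ℚ) - 1 := by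
        exact_mod_cast h2
      linarith
    cases hx : x i with
    | false => simp [toQ, hz, hx]
    | true =>
      simp only [toQ, hz, hx, if_true, if_false, ne_eq]
      norm_num
      linarith

end Aux

/-- Energy drops by at least 1 when far from a 2-cycle: if the trajectory from `x`
does not enter a 2-cycle within `2|V|` time steps, then `F²(x)` differs from `x` in
at least 2 coordinates, and `E(F(x)) + 1 ≤ E(x)`. -/
theorem energy_drops_by_one_when_far_from_two_cycle {V : Type*} [Fintype V]
    [DecidableEq V] (G : SimpleGraph V) [DecidableRel G.Adj] (b : V → ℤ) (x : V → Bool)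
    (h : ¬ ∃ t ≤ 2 * Fintype.card V, (thrUpd G b)^[t + 2] x = (thrUpd G b)^[t] x) :
    2 ≤ (Finset.univ.filter fun i => (thrUpd G b)^[2] x i ≠ x i).card ∧
      energy G b (thrUpd G b x) + 1 ≤ energy G b x := by
  push_neg at h
  have hit2 : (thrUpd G b)^[2] x = thrUpd G b (thrUpd G b x) := rfl
  have hmg : ∀ u v : V → Bool, (∀ i, u i = true → v i = true) →
      ∀ i, (thrUpd G b)^[2] u i = true → (thrUpd G b)^[2] v i = true := by
    intro u v huv i
    exact thrUpd_mono G b (thrUpd_mono G b huv) i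
  have hiter : ∀ s : ℕ, ((thrUpd G b)^[2])^[s] x = (thrUpd G b)^[2*s] x := by
    intro s
    rw [Function.iterate_mul]
  have h2 : 2 ≤ (Finset.univ.filter fun i => (thrUpd G b)^[2] x i ≠ x i).card := by
    by_contra hlt
    push_neg at hlt
    have hcase : (∀ i, x i = true → (thrUpd G b)^[2] x i = true) ∨
        (∀ i, (thrUpd G b)^[2] x i = true → x i = true) := by
      by_contra hcc
      push_neg at hcc
      obtain ⟨⟨i, hxi, hzi⟩, ⟨j, hzj, hxj⟩⟩ := hcc
      have hij : i ≠ j := by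
        rintro rfl
        exact hzi hzj
      have hmi : i ∈ (Finset.univ.filter fun i => (thrUpd G b)^[2] x i ≠ x i) := by
        simp only [Finset.mem_filter, Finset.mem_univ, true_and]
        intro hh
        rw [hh] at hzi
        exact hzi hxi
      have hmj : j ∈ (Finset.univ.filter fun i => (thrUpd G b)^[2] x i ≠ x i) := by
        simp only [Finset.mem_filter, Finset.mem_univ, true_and]
        intro hh
        rw [← hh] at hxj
        exact hxj hzj
      have := Finset.one_lt_card.mpr ⟨i, hmi, j, hmj, hij⟩
      omega
    have hstab : ∃ t ≤ Fintype.card V,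
        ((thrUpd G b)^[2])^[t+1] x = ((thrUpd G b)^[2])^[t] x := by
      rcases hcase with hca | hca
      · exact chain_stab_inc ((thrUpd G b)^[2]) hmg x hca
      · exact chain_stab_dec ((thrUpd G b)^[2]) hmg x hca
    obtain ⟨t, ht, heq⟩ := hstab
    rw [hiter, hiter] at heq
    refine h (2*t) (by omega) ?_
    have : 2 * t + 2 = 2 * (t + 1) := by ring
    rw [this]
    exact heq
  refine ⟨h2, ?_⟩
  have hdiff := energy_diff G b x
  have hsum : ∑ i, (if thrUpd G b (thrUpd G b x) i ≠ x i then (1:ℚ)/2 else 0) ≤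
      ∑ i, (Avec G (thrUpd G b x) i - halfThr b i) *
        (toQ (thrUpd G b (thrUpd G b x)) i - toQ x i) :=
    Finset.sum_le_sum fun i _ => term_ge G b (thrUpd G b x) x i
  have h2' : 2 ≤ (Finset.univ.filter fun i => thrUpd G b (thrUpd G b x) i ≠ x i).card := by
    have := h2
    simp only [hit2] at this
    exact this
  have hcount : ∑ i, (if thrUpd G b (thrUpd G b x) i ≠ x i then (1:ℚ)/2 else 0) =
      ((Finset.univ.filter fun i => thrUpd G b (thrUpd G b x) i ≠ x i).card : ℚ) * (1/2) := by
    rw [← Finset.sum_filter, Finset.sum_const, nsmul_eq_mul]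
  have hcast : (2:ℚ) ≤
      ((Finset.univ.filter fun i => thrUpd G b (thrUpd G b x) i ≠ x i).card : ℚ) := by
    exact_mod_cast h2' 
  rw [hcount] at hsum
  linarith
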